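/- Let A be a diagonal n×n real matrix with det(A) ≠ 0 and let σ be in the interior of π_T(B_op(n)). Then the maximizer of ⟨A, X⟩ over {X ∈ B_op(n) : π_T(X) = σ} is unique and lies in O(n); if moreover det(A) > 0, it lies in SO(n). -/

import Mathlib

open Matrix

/-- The ℓ²→ℓ² operator norm of a real matrix. -/
noncomputable def opNorm {m p : ℕ} (M : Matrix (Fin m) (Fin p) ℝ) : ℝ :=
  ‖LinearMap.toContinuousLinearMap (Matrix.toEuclideanLin (𝕜 := ℝ) M)‖

/-- The operator norm unit ball in `ℝ^{n×n}`. -/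
noncomputable def opNormBall (n : ℕ) : Set (Matrix (Fin n) (Fin n) ℝ) :=
  {X | opNorm X ≤ 1}

/-- The projection of a matrix onto its strictly upper triangular entries. -/
def sutProj {n : ℕ} (X : Matrix (Fin n) (Fin n) ℝ) :
    {q : Fin n × Fin n // q.1 < q.2} → ℝ :=
  fun q => X q.1.1 q.1.2

lemma euclid_norm_sq {n : ℕ} (v : Fin n → ℝ) :
    ‖(WithLp.equiv 2 (Fin n → ℝ)).symm v‖ ^ 2 = v ⬝ᵥ v := by
  rw [EuclideanSpace.norm_eq]
  rw [Real.sq_sqrt (by positivity)]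
  simp [dotProduct, sq]

lemma opNorm_le_one_iff {n : ℕ} (M : Matrix (Fin n) (Fin n) ℝ) :
    opNorm M ≤ 1 ↔ ∀ v : Fin n → ℝ, (M *ᵥ v) ⬝ᵥ (M *ᵥ v) ≤ v ⬝ᵥ v := by
  constructor
  · intro h v
    have h2 := (LinearMap.toContinuousLinearMap (Matrix.toEuclideanLin (𝕜 := ℝ) M)).le_opNorm
      ((WithLp.equiv 2 (Fin n → ℝ)).symm v)
    have h3 : ‖LinearMap.toContinuousLinearMap (Matrix.toEuclideanLin (𝕜 := ℝ) M)
        ((WithLp.equiv 2 (Fin n → ℝ)).symm v)‖ ≤ ‖(WithLp.equiv 2 (Fin n → ℝ)).symm v‖ := by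
      calc _ ≤ opNorm M * ‖(WithLp.equiv 2 (Fin n → ℝ)).symm v‖ := h2
        _ ≤ 1 * _ := by
          apply mul_le_mul_of_nonneg_right h (norm_nonneg _)
        _ = _ := one_mul _
    have h4 : LinearMap.toContinuousLinearMap (Matrix.toEuclideanLin (𝕜 := ℝ) M)
        ((WithLp.equiv 2 (Fin n → ℝ)).symm v) = (WithLp.equiv 2 (Fin n → ℝ)).symm (M *ᵥ v) := by
      rfl
    rw [h4] at h3
    calc (M *ᵥ v) ⬝ᵥ (M *ᵥ v) = ‖(WithLp.equiv 2 (Fin n → ℝ)).symm (M *ᵥ v)‖^2 :=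
        (euclid_norm_sq _).symm
      _ ≤ ‖(WithLp.equiv 2 (Fin n → ℝ)).symm v‖^2 := by
          apply pow_le_pow_left₀ (norm_nonneg _) h3
      _ = v ⬝ᵥ v := euclid_norm_sq _
  · intro h
    apply ContinuousLinearMap.opNorm_le_bound _ zero_le_one
    intro x
    rw [one_mul]
    set v : Fin n → ℝ := WithLp.equiv 2 (Fin n → ℝ) x with hv
    have hx : x = (WithLp.equiv 2 (Fin n → ℝ)).symm v := rfl
    rw [hx]
    have h4 : LinearMap.toContinuousLinearMap (Matrix.toEuclideanLin (𝕜 := ℝ) M)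
        ((WithLp.equiv 2 (Fin n → ℝ)).symm v) = (WithLp.equiv 2 (Fin n → ℝ)).symm (M *ᵥ v) := by
      rfl
    rw [h4]
    have := h v
    nlinarith [euclid_norm_sq (M *ᵥ v), euclid_norm_sq v, norm_nonneg ((WithLp.equiv 2 (Fin n → ℝ)).symm (M *ᵥ v)), norm_nonneg ((WithLp.equiv 2 (Fin n → ℝ)).symm v)]

noncomputable def matCLM (n : ℕ) : Matrix (Fin n) (Fin n) ℝ →ₗ[ℝ]
    (EuclideanSpace ℝ (Fin n) →L[ℝ] EuclideanSpace ℝ (Fin n)) :=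
  (LinearMap.toContinuousLinearMap.toLinearMap).comp (Matrix.toEuclideanLin (𝕜 := ℝ)).toLinearMap

lemma opNorm_eq (n : ℕ) (M : Matrix (Fin n) (Fin n) ℝ) : opNorm M = ‖matCLM n M‖ := rfl

lemma opNorm_nonneg {n : ℕ} (M : Matrix (Fin n) (Fin n) ℝ) : 0 ≤ opNorm M := norm_nonneg _

lemma opNorm_add_le {n : ℕ} (M N : Matrix (Fin n) (Fin n) ℝ) :
    opNorm (M + N) ≤ opNorm M + opNorm N := by
  rw [opNorm_eq, opNorm_eq, opNorm_eq, map_add]; exact norm_add_le _ _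

lemma opNorm_smul {n : ℕ} (c : ℝ) (M : Matrix (Fin n) (Fin n) ℝ) :
    opNorm (c • M) = |c| * opNorm M := by
  rw [opNorm_eq, opNorm_eq, _root_.map_smul]
  rw [norm_smul c ((matCLM n) M), Real.norm_eq_abs]

lemma continuous_opNorm {n : ℕ} : Continuous (opNorm (m := n) (p := n)) := by
  have h1 : Continuous (matCLM n) := (matCLM n).continuous_of_finiteDimensional
  exact continuous_norm.comp h1

lemma isClosed_opNormBall (n : ℕ) : IsClosed (opNormBall n) :=
  isClosed_le continuous_opNorm continuous_const

lemma convex_opNormBall (n : ℕ) : Convex ℝ (opNormBall n) := by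
  intro X hX Y hY a b ha hb hab
  simp only [opNormBall, Set.mem_setOf_eq] at *
  calc opNorm (a • X + b • Y) ≤ opNorm (a • X) + opNorm (b • Y) := opNorm_add_le _ _
    _ = |a| * opNorm X + |b| * opNorm Y := by rw [opNorm_smul, opNorm_smul]
    _ ≤ |a| * 1 + |b| * 1 := by
        have h1 := abs_nonneg a
        have h2 := abs_nonneg b
        have := opNorm_nonneg X
        have := opNorm_nonneg Y
        nlinarith
    _ = 1 := by rw [abs_of_nonneg ha, abs_of_nonneg hb]; linarith
lemma mem_opNormBall_iff {n : ℕ} (M : Matrix (Fin n) (Fin n) ℝ) :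
    M ∈ opNormBall n ↔ ∀ v : Fin n → ℝ, (M *ᵥ v) ⬝ᵥ (M *ᵥ v) ≤ v ⬝ᵥ v :=
  opNorm_le_one_iff M

lemma entry_le_of_mem_ball {n : ℕ} {M : Matrix (Fin n) (Fin n) ℝ} (hM : M ∈ opNormBall n)
    (i j : Fin n) : M i j ∈ Set.Icc (-1 : ℝ) 1 := by
  have h := (mem_opNormBall_iff M).mp hM (Pi.single j 1)
  have hv : (Pi.single j 1 : Fin n → ℝ) ⬝ᵥ (Pi.single j 1) = 1 := by simp
  have hMv : ∀ k, (M *ᵥ Pi.single j 1) k = M k j := by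
    intro k; simp [Matrix.mulVec_single]
  have h2 : (M i j)^2 ≤ 1 := by
    have : (M *ᵥ Pi.single j 1) ⬝ᵥ (M *ᵥ Pi.single j 1) = ∑ k, (M k j)^2 := by
      simp [dotProduct, hMv, sq]
    rw [this, hv] at h
    refine le_trans ?_ h
    exact Finset.single_le_sum (f := fun k => (M k j)^2) (fun k _ => sq_nonneg _) (Finset.mem_univ i)
  constructor <;> nlinarith

lemma isCompact_opNormBall (n : ℕ) : IsCompact (opNormBall n) := by
  have hsub : opNormBall n ⊆ Set.pi Set.univ (fun _ : Fin n =>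
      Set.pi Set.univ fun _ : Fin n => Set.Icc (-1 : ℝ) 1) := by
    intro M hM
    intro i _
    intro j _
    exact entry_le_of_mem_ball hM i j
  have hcomp : IsCompact (Set.pi Set.univ (fun _ : Fin n =>
      Set.pi Set.univ fun _ : Fin n => Set.Icc (-1 : ℝ) 1)) := by
    apply isCompact_univ_pi
    intro i
    apply isCompact_univ_pi
    intro j
    exact isCompact_Icc
  exact IsCompact.of_isClosed_subset hcomp (isClosed_opNormBall n) hsub

lemma zero_mem_opNormBall (n : ℕ) : (0 : Matrix (Fin n) (Fin n) ℝ) ∈ opNormBall n := by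
  rw [mem_opNormBall_iff]
  intro v
  rw [Matrix.zero_mulVec]
  simp only [dotProduct, Pi.zero_apply, zero_mul]
  rw [Finset.sum_const_zero]
  exact Finset.sum_nonneg fun i _ => mul_self_nonneg _

/-- entrywise inner product -/
def mip {n : ℕ} (B X : Matrix (Fin n) (Fin n) ℝ) : ℝ := ∑ i, ∑ j, B i j * X i j

lemma mip_eq_trace {n : ℕ} (B X : Matrix (Fin n) (Fin n) ℝ) : mip B X = (Bᵀ * X).trace := by
  simp [mip, Matrix.trace, Matrix.diag, Matrix.mul_apply, Matrix.transpose_apply]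
  rw [Finset.sum_comm]
lemma dot_self_nonneg' {n : ℕ} (v : Fin n → ℝ) : 0 ≤ v ⬝ᵥ v :=
  Finset.sum_nonneg fun i _ => mul_self_nonneg _

lemma dot_shift {n : ℕ} (M : Matrix (Fin n) (Fin n) ℝ) (v w : Fin n → ℝ) :
    (M *ᵥ v) ⬝ᵥ w = v ⬝ᵥ (Mᵀ *ᵥ w) := by
  rw [Matrix.dotProduct_mulVec, Matrix.vecMul_transpose]

lemma dot_le_dot {n : ℕ} {a b : Fin n → ℝ} {c : ℝ} (hc : 0 ≤ c)
    (ha : a ⬝ᵥ a ≤ c) (hb : b ⬝ᵥ b ≤ c) : a ⬝ᵥ b ≤ c := by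
  have h := Finset.sum_mul_sq_le_sq_mul_sq Finset.univ a b
  have h1 : (a ⬝ᵥ b)^2 ≤ (a ⬝ᵥ a) * (b ⬝ᵥ b) := by
    simpa [dotProduct, sq] using h
  nlinarith [dot_self_nonneg' a, dot_self_nonneg' b]

open scoped MatrixOrder in
lemma fact2 {n : ℕ} (B : Matrix (Fin n) (Fin n) ℝ) (hB : B.det ≠ 0) :
    ∃ Q : Matrix (Fin n) (Fin n) ℝ, Qᵀ * Q = 1 ∧ Q ∈ opNormBall n ∧
      (0 < B.det → Q.det = 1) ∧
      ∀ X ∈ opNormBall n, mip B X ≤ mip B Q ∧ (mip B X = mip B Q → X = Q) := by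
  have hH : (Bᵀ * B).PosSemidef := by
    have := Matrix.posSemidef_conjTranspose_mul_self B
    rwa [Matrix.conjTranspose_eq_transpose_of_trivial] at this
  set P := CFC.sqrt (Bᵀ * B) with hPdef
  have hPP : P * P = Bᵀ * B := CFC.sqrt_mul_sqrt_self _ hH.nonneg
  have hPsd : P.PosSemidef := (CFC.sqrt_nonneg _).posSemidef
  have hPsym : Pᵀ = P := by
    have := hPsd.1
    rwa [Matrix.IsHermitian, Matrix.conjTranspose_eq_transpose_of_trivial] at this
  have hdetP2 : P.det * P.det = B.det * B.det := by
    have : (P * P).det = (Bᵀ * B).det := by rw [hPP]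
    rwa [Matrix.det_mul, Matrix.det_mul, Matrix.det_transpose] at this
  have hdetP : P.det ≠ 0 := by
    intro h; rw [h, zero_mul] at hdetP2; exact hB (by nlinarith)
  have hdetPnonneg : 0 ≤ P.det := by
    rw [hPsd.1.det_eq_prod_eigenvalues]
    have h := Finset.prod_nonneg (s := (Finset.univ : Finset (Fin n)))
      (fun i _ => hPsd.eigenvalues_nonneg i)
    exact_mod_cast h
  have hdetPpos : 0 < P.det := lt_of_le_of_ne hdetPnonneg (Ne.symm hdetP)
  have hPunit : IsUnit P.det := isUnit_iff_ne_zero.mpr hdetP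
  set Q := B * P⁻¹ with hQdef
  have hPinvT : P⁻¹ᵀ = P⁻¹ := by rw [Matrix.transpose_nonsing_inv, hPsym]
  have hQtQ : Qᵀ * Q = 1 := by
    calc Qᵀ * Q = P⁻¹ᵀ * Bᵀ * (B * P⁻¹) := by rw [hQdef, Matrix.transpose_mul, mul_assoc]
      _ = P⁻¹ * ((Bᵀ * B) * P⁻¹) := by rw [hPinvT, mul_assoc, ← mul_assoc (Bᵀ)]
      _ = P⁻¹ * (P * (P * P⁻¹)) := by rw [← hPP, mul_assoc]
      _ = P⁻¹ * P := by rw [Matrix.mul_nonsing_inv _ hPunit, mul_one]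
      _ = 1 := Matrix.nonsing_inv_mul _ hPunit
  have hQQt : Q * Qᵀ = 1 := mul_eq_one_comm.mp hQtQ
  have hBQP : B = Q * P := by
    rw [hQdef, mul_assoc, Matrix.nonsing_inv_mul _ hPunit, mul_one]
  have hQnormsq : ∀ v : Fin n → ℝ, (Q *ᵥ v) ⬝ᵥ (Q *ᵥ v) = v ⬝ᵥ v := by
    intro v
    rw [dot_shift, Matrix.mulVec_mulVec, hQtQ, Matrix.one_mulVec]
  have hQball : Q ∈ opNormBall n := by
    rw [mem_opNormBall_iff]; intro v; rw [hQnormsq]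
  have hQtnormsq : ∀ w : Fin n → ℝ, (Qᵀ *ᵥ w) ⬝ᵥ (Qᵀ *ᵥ w) = w ⬝ᵥ w := by
    intro w
    rw [dot_shift, Matrix.mulVec_mulVec, Matrix.transpose_transpose, hQQt, Matrix.one_mulVec]
  -- determinant
  have hdetQ : (0 < B.det → Q.det = 1) := by
    intro hBpos
    have h1 : Q.det * Q.det = 1 := by
      have : (Qᵀ * Q).det = (1 : Matrix (Fin n) (Fin n) ℝ).det := by rw [hQtQ]
      rwa [Matrix.det_mul, Matrix.det_transpose, Matrix.det_one] at this
    have h2 : 0 < Q.det := by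
      have : B.det = Q.det * P.det := by rw [hBQP, Matrix.det_mul]
      nlinarith
    nlinarith
  -- sqrt of P
  set R := CFC.sqrt P with hRdef
  have hRR : R * R = P := CFC.sqrt_mul_sqrt_self _ hPsd.nonneg
  have hRsd : R.PosSemidef := (CFC.sqrt_nonneg _).posSemidef
  have hRsym : Rᵀ = R := by
    have := hRsd.1
    rwa [Matrix.IsHermitian, Matrix.conjTranspose_eq_transpose_of_trivial] at this
  have hdetR : R.det ≠ 0 := by
    intro h
    have : (R * R).det = P.det := by rw [hRR]
    rw [Matrix.det_mul, h, zero_mul] at this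
    exact hdetP this.symm
  have hRunit : IsUnit R.det := isUnit_iff_ne_zero.mpr hdetR
  have hmipQ : mip B Q = P.trace := by
    rw [mip_eq_trace, hBQP, Matrix.transpose_mul, hPsym, mul_assoc, hQtQ, mul_one]
  refine ⟨Q, hQtQ, hQball, hdetQ, ?_⟩
  intro X hX
  set M := Qᵀ * X with hMdef
  set N := (1 : Matrix (Fin n) (Fin n) ℝ) - M with hNdef
  have hquadM : ∀ v : Fin n → ℝ, (M *ᵥ v) ⬝ᵥ (M *ᵥ v) ≤ v ⬝ᵥ v := by
    intro v
    have h1 : M *ᵥ v = Qᵀ *ᵥ (X *ᵥ v) := by rw [hMdef, ← Matrix.mulVec_mulVec]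
    rw [h1, hQtnormsq]
    exact (mem_opNormBall_iff X).mp hX v
  have hquadN : ∀ v : Fin n → ℝ, 0 ≤ v ⬝ᵥ (N *ᵥ v) := by
    intro v
    have h1 : N *ᵥ v = v - M *ᵥ v := by
      rw [hNdef, Matrix.sub_mulVec, Matrix.one_mulVec]
    rw [h1, dotProduct_sub]
    have h2 : v ⬝ᵥ (M *ᵥ v) ≤ v ⬝ᵥ v := by
      have h3 : M *ᵥ v = Qᵀ *ᵥ (X *ᵥ v) := by rw [hMdef, ← Matrix.mulVec_mulVec]
      have h4 : v ⬝ᵥ (M *ᵥ v) = (Q *ᵥ v) ⬝ᵥ (X *ᵥ v) := by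
        rw [h3, ← dot_shift]
      rw [h4]
      exact dot_le_dot (dot_self_nonneg' v) (le_of_eq (hQnormsq v))
        ((mem_opNormBall_iff X).mp hX v)
    linarith
  -- columns of R
  set w : Fin n → (Fin n → ℝ) := fun i => fun k => R k i with hwdef
  have hRs : ∀ a b : Fin n, R a b = R b a := by
    intro a b
    rw [show R a b = Rᵀ b a from rfl, hRsym]
  have htrace_decomp : (P * N).trace = ∑ i, (w i) ⬝ᵥ (N *ᵥ (w i)) := by
    have h1 : P * N = R * R * N := by rw [hRR]
    have h2 : (R * R * N).trace = (R * N * R).trace := by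
      rw [Matrix.trace_mul_cycle R N R]
    rw [h1, h2]
    rw [Matrix.trace]
    apply Finset.sum_congr rfl
    intro i _
    simp only [Matrix.diag, Matrix.mul_apply, dotProduct, Matrix.mulVec, Finset.sum_mul,
      Finset.mul_sum]
    rw [Finset.sum_comm]
    apply Finset.sum_congr rfl
    intro k _
    apply Finset.sum_congr rfl
    intro j _
    have e1 : w i k = R k i := rfl
    have e2 : w i j = R j i := rfl
    rw [e1, e2, hRs i k]
    ring
  have hmipX : mip B X = P.trace - (P * N).trace := by
    rw [mip_eq_trace, hBQP, Matrix.transpose_mul, hPsym]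
    have : P * Qᵀ * X = P * M := by rw [mul_assoc, hMdef]
    rw [this, hNdef, Matrix.mul_sub, mul_one, Matrix.trace_sub]
    ring
  have htraceN_nonneg : 0 ≤ (P * N).trace := by
    rw [htrace_decomp]
    exact Finset.sum_nonneg fun i _ => hquadN (w i)
  constructor
  · rw [hmipX, hmipQ]; linarith
  · intro heq
    rw [hmipX, hmipQ] at heq
    have hg0 : (P * N).trace = 0 := by linarith
    rw [htrace_decomp] at hg0
    have hterm : ∀ i, (w i) ⬝ᵥ (N *ᵥ (w i)) = 0 := by
      intro i
      have := (Finset.sum_eq_zero_iff_of_nonneg (fun i _ => hquadN (w i))).mp hg0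
      exact this i (Finset.mem_univ i)
    -- symmetric part
    set S := N + Nᵀ with hSdef
    have hSsym : Sᵀ = S := by rw [hSdef, Matrix.transpose_add, Matrix.transpose_transpose, add_comm]
    have hNTquad : ∀ v : Fin n → ℝ, v ⬝ᵥ (Nᵀ *ᵥ v) = v ⬝ᵥ (N *ᵥ v) := by
      intro v
      rw [← dot_shift, dotProduct_comm]
    have hSpsd : S.PosSemidef := by
      refine Matrix.PosSemidef.of_dotProduct_mulVec_nonneg ?_ ?_
      · rw [Matrix.IsHermitian, Matrix.conjTranspose_eq_transpose_of_trivial, hSsym]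
      · intro x
        have hsx : star x = x := by simp
        rw [hsx, hSdef, Matrix.add_mulVec, dotProduct_add, hNTquad]
        have := hquadN x
        linarith
    have hSw : ∀ i, S *ᵥ (w i) = 0 := by
      intro i
      apply (hSpsd.dotProduct_mulVec_zero_iff (w i)).mp
      have hsx : star (w i) = w i := by simp
      rw [hsx, hSdef, Matrix.add_mulVec, dotProduct_add, hNTquad, hterm i]
      ring
    have hSR : S * R = 0 := by
      ext j i
      have : (S * R) j i = (S *ᵥ (w i)) j := by
        simp [Matrix.mul_apply, Matrix.mulVec, dotProduct, hwdef]
      rw [this, hSw i]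
      rfl
    have hS0 : S = 0 := by
      have : S * R * R⁻¹ = 0 := by rw [hSR, Matrix.zero_mul]
      rwa [mul_assoc, Matrix.mul_nonsing_inv _ hRunit, mul_one] at this
    have hsum : N + Nᵀ = 0 := by rw [← hSdef, hS0]
    have hNT : Nᵀ = -N := by
      rw [add_comm] at hsum
      exact add_eq_zero_iff_eq_neg.mp hsum
    have hskew : ∀ v : Fin n → ℝ, v ⬝ᵥ (N *ᵥ v) = 0 := by
      intro v
      have h1 := hNTquad v
      rw [hNT, Matrix.neg_mulVec, dotProduct_neg] at h1
      linarith
    have hNv : ∀ v : Fin n → ℝ, N *ᵥ v = 0 := by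
      intro v
      have hMv : M *ᵥ v = v - N *ᵥ v := by
        rw [hNdef, Matrix.sub_mulVec, Matrix.one_mulVec]
        abel
      have hexp : (M *ᵥ v) ⬝ᵥ (M *ᵥ v)
          = v ⬝ᵥ v - 2 * (v ⬝ᵥ (N *ᵥ v)) + (N *ᵥ v) ⬝ᵥ (N *ᵥ v) := by
        rw [hMv, dotProduct_sub, sub_dotProduct, sub_dotProduct]
        rw [dotProduct_comm (N *ᵥ v) v]
        ring
      have h2 := hquadM v
      rw [hexp, hskew v] at h2
      have h3 : (N *ᵥ v) ⬝ᵥ (N *ᵥ v) ≤ 0 := by linarith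
      have h4 : (N *ᵥ v) ⬝ᵥ (N *ᵥ v) = 0 := le_antisymm h3 (dot_self_nonneg' _)
      exact dotProduct_self_eq_zero.mp h4
    have hN0 : N = 0 := by
      ext i j
      have h5 := hNv (Pi.single j 1)
      have h6 : (N *ᵥ Pi.single j 1) i = 0 := by rw [h5]; rfl
      simpa using h6
    have hM1 : M = 1 := by
      have : (1 : Matrix (Fin n) (Fin n) ℝ) - M = 0 := by rw [← hNdef, hN0]
      have h7 := sub_eq_zero.mp this
      exact h7.symm
    have : Q * (Qᵀ * X) = Q * 1 := by rw [← hMdef, hM1]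
    rw [← mul_assoc, hQQt, one_mul, mul_one] at this
    exact this
/-! ### Linear maps -/

def sutProjL (n : ℕ) : Matrix (Fin n) (Fin n) ℝ →ₗ[ℝ] ({q : Fin n × Fin n // q.1 < q.2} → ℝ) where
  toFun := sutProj
  map_add' := fun X Y => rfl
  map_smul' := fun c X => rfl

def mipL {n : ℕ} (B : Matrix (Fin n) (Fin n) ℝ) : Matrix (Fin n) (Fin n) ℝ →ₗ[ℝ] ℝ where
  toFun := mip B
  map_add' := fun X Y => by
    simp [mip, mul_add, Finset.sum_add_distrib]
  map_smul' := fun c X => by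
    simp [mip, Finset.mul_sum]
    apply Finset.sum_congr rfl
    intro i _
    apply Finset.sum_congr rfl
    intro j _
    ring

lemma mip_smul_left {n : ℕ} (c : ℝ) (B X : Matrix (Fin n) (Fin n) ℝ) :
    mip (c • B) X = c * mip B X := by
  simp [mip, Finset.mul_sum]
  apply Finset.sum_congr rfl; intro i _
  apply Finset.sum_congr rfl; intro j _
  ring

lemma mip_sub_left {n : ℕ} (B C X : Matrix (Fin n) (Fin n) ℝ) :
    mip (B - C) X = mip B X - mip C X := by
  simp [mip, sub_mul, Finset.sum_sub_distrib]

/-- openness of images of open sets under linear maps with continuous linear right inverse -/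
lemma isOpenMap_of_rightInv {E F : Type*} [AddCommGroup E] [Module ℝ E] [TopologicalSpace E]
    [IsTopologicalAddGroup E] [AddCommGroup F] [Module ℝ F] [TopologicalSpace F]
    [IsTopologicalAddGroup F]
    (L : E →ₗ[ℝ] F) (hLc : Continuous L) (G : F → E) (hGc : Continuous G)
    (hLG : ∀ y, L (G y) = y) : IsOpenMap L := by
  intro U hU
  rw [isOpen_iff_mem_nhds]
  rintro y ⟨x, hxU, rfl⟩
  have hg : Continuous (fun z : F => x - G (L x) + G z) :=
    Continuous.add continuous_const hGc
  have hgy : (fun z : F => x - G (L x) + G z) (L x) ∈ U := by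
    simpa using hxU
  have hmem : (fun z : F => x - G (L x) + G z) ⁻¹' U ∈ nhds (L x) :=
    (hU.preimage hg).mem_nhds hgy
  apply Filter.mem_of_superset hmem
  intro z hz
  refine ⟨x - G (L x) + G z, hz, ?_⟩
  simp [map_add, map_sub, hLG]
/-! ### section of sutProj and strict ball facts -/

def Mlin (n : ℕ) : ({q : Fin n × Fin n // q.1 < q.2} → ℝ) →ₗ[ℝ] Matrix (Fin n) (Fin n) ℝ where
  toFun := fun τ => Matrix.of fun i j => if h : i < j then τ ⟨(i, j), h⟩ else 0
  map_add' := fun τ τ' => by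
    ext i j
    by_cases h : i < j <;> simp [h]
  map_smul' := fun c τ => by
    ext i j
    by_cases h : i < j <;> simp [h]

lemma sutProj_Mlin {n : ℕ} (τ : {q : Fin n × Fin n // q.1 < q.2} → ℝ) :
    sutProj (Mlin n τ) = τ := by
  funext q
  simp [sutProj, Mlin, q.2]

/-- the strict open ball -/
noncomputable def opBallLT (n : ℕ) : Set (Matrix (Fin n) (Fin n) ℝ) := {X | opNorm X < 1}

lemma isOpen_opBallLT (n : ℕ) : IsOpen (opBallLT n) :=
  isOpen_lt continuous_opNorm continuous_const

lemma convex_opBallLT (n : ℕ) : Convex ℝ (opBallLT n) := by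
  intro X hX Y hY a b ha hb hab
  simp only [opBallLT, Set.mem_setOf_eq] at *
  have key : opNorm (a • X + b • Y) ≤ a * opNorm X + b * opNorm Y := by
    calc opNorm (a • X + b • Y) ≤ opNorm (a • X) + opNorm (b • Y) := opNorm_add_le _ _
      _ = a * opNorm X + b * opNorm Y := by
          rw [opNorm_smul, opNorm_smul, abs_of_nonneg ha, abs_of_nonneg hb]
  by_cases ha0 : a = 0
  · have hb1 : b = 1 := by linarith
    nlinarith [opNorm_nonneg X]
  · have ha' : 0 < a := lt_of_le_of_ne ha (Ne.symm ha0)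
    nlinarith [mul_lt_mul_of_pos_left hX ha', mul_le_mul_of_nonneg_left hY.le hb]

lemma zero_mem_opBallLT (n : ℕ) : (0 : Matrix (Fin n) (Fin n) ℝ) ∈ opBallLT n := by
  have h0 : opNorm (0 : Matrix (Fin n) (Fin n) ℝ) = 0 := by
    have := opNorm_smul (n := n) 0 0
    simpa using this
  simp [opBallLT, h0]

lemma opBallLT_subset_ball (n : ℕ) : opBallLT n ⊆ opNormBall n := by
  intro X hX
  exact le_of_lt (show opNorm X < 1 from hX)

lemma smul_mem_opBallLT {n : ℕ} {X : Matrix (Fin n) (Fin n) ℝ} (hX : X ∈ opNormBall n)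
    {t : ℝ} (ht0 : 0 ≤ t) (ht1 : t < 1) : t • X ∈ opBallLT n := by
  simp only [opBallLT, Set.mem_setOf_eq]
  rw [opNorm_smul, abs_of_nonneg ht0]
  calc t * opNorm X ≤ t * 1 := mul_le_mul_of_nonneg_left hX ht0
    _ < 1 := by linarith

/-- every point of the closed ball is a limit of points of the open ball -/
lemma ball_subset_closure_opBallLT (n : ℕ) : opNormBall n ⊆ closure (opBallLT n) := by
  intro X hX
  have hmem : ∀ m : ℕ, (1 - 1/(m+1 : ℝ)) • X ∈ opBallLT n := by
    intro m
    apply smul_mem_opBallLT hX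
    · have : (1:ℝ)/(m+1) ≤ 1 := by
        rw [div_le_one (by positivity)]
        linarith
      linarith
    · have : (0:ℝ) < 1/(m+1) := by positivity
      linarith
  have h1 : Filter.Tendsto (fun m : ℕ => (1 - 1/(m+1 : ℝ))) Filter.atTop (nhds 1) := by
    have := tendsto_one_div_add_atTop_nhds_zero_nat (𝕜 := ℝ)
    have h2 := Filter.Tendsto.const_sub (1:ℝ) this
    simpa using h2
  have h3 := Filter.Tendsto.smul_const h1 X
  have h4 : Filter.Tendsto (fun m : ℕ => (1 - 1/(m+1 : ℝ)) • X) Filter.atTop (nhds X) := by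
    simpa using h3
  exact mem_closure_of_tendsto h4 (Filter.Eventually.of_forall hmem)
lemma sutProjL_coe (n : ℕ) : ⇑(sutProjL n) = sutProj := rfl

lemma continuous_sutProj (n : ℕ) : Continuous (sutProj (n := n)) := by
  rw [← sutProjL_coe]
  exact (sutProjL n).continuous_of_finiteDimensional

lemma slater {n : ℕ} {σ : {q : Fin n × Fin n // q.1 < q.2} → ℝ}
    (hσ : σ ∈ interior (sutProj '' opNormBall n)) :
    ∃ X0, X0 ∈ opBallLT n ∧ sutProj X0 = σ := by
  set W := sutProj '' opBallLT n with hWdef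
  have hWopen : IsOpen W := by
    have hmap : IsOpenMap (sutProjL n) :=
      isOpenMap_of_rightInv (sutProjL n) (sutProjL n).continuous_of_finiteDimensional
        (Mlin n) (Mlin n).continuous_of_finiteDimensional (fun τ => sutProj_Mlin τ)
    have := hmap _ (isOpen_opBallLT n)
    rwa [sutProjL_coe] at this
  have hWconvex : Convex ℝ W := by
    have := (convex_opBallLT n).linear_image (sutProjL n)
    rwa [sutProjL_coe] at this
  have h0W : (0 : {q : Fin n × Fin n // q.1 < q.2} → ℝ) ∈ W :=
    ⟨0, zero_mem_opBallLT n, rfl⟩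
  have hsub : sutProj '' opNormBall n ⊆ closure W := by
    intro y ⟨X, hX, hXy⟩
    have h1 : y ∈ sutProj '' closure (opBallLT n) :=
      ⟨X, ball_subset_closure_opBallLT n hX, hXy⟩
    exact (image_closure_subset_closure_image (continuous_sutProj n)) h1
  have hσ2 : σ ∈ interior (closure W) :=
    interior_mono hsub hσ
  have hσW : σ ∈ W := by
    rw [mem_interior_iff_mem_nhds, Metric.mem_nhds_iff] at hσ2
    obtain ⟨ε, hε, hball⟩ := hσ2
    set ε' := ε / (2 * (‖σ‖ + 1)) with hε'def
    have hε'pos : 0 < ε' := by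
      apply div_pos hε
      positivity
    have hz : (1 + ε') • σ ∈ closure W := by
      apply hball
      rw [Metric.mem_ball, dist_eq_norm]
      have : (1 + ε') • σ - σ = ε' • σ := by
        rw [add_smul, one_smul]
        abel
      rw [this, norm_smul, Real.norm_eq_abs, abs_of_pos hε'pos]
      have hn1 : ‖σ‖ < ‖σ‖ + 1 := by linarith
      have hpos : (0:ℝ) < ‖σ‖ + 1 := by positivity
      calc ε' * ‖σ‖ ≤ ε' * (‖σ‖ + 1) := by nlinarith [norm_nonneg σ]
        _ = ε / 2 := by
            rw [hε'def]
            field_simp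
        _ < ε := by linarith
    have hcombo := hWconvex.combo_interior_closure_mem_interior
      (x := 0) (y := (1 + ε') • σ) (a := ε'/(1+ε')) (b := 1/(1+ε'))
      (by rw [hWopen.interior_eq]; exact h0W) hz
      (by positivity) (by positivity)
      (by
        have h1 : (0:ℝ) < 1 + ε' := by linarith
        field_simp
        ring)
    have heq : (ε'/(1+ε')) • (0 : {q : Fin n × Fin n // q.1 < q.2} → ℝ)
        + (1/(1+ε')) • ((1 + ε') • σ) = σ := by
      rw [smul_zero, zero_add, smul_smul]
      rw [show (1/(1+ε')) * (1 + ε') = 1 by field_simp]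
      rw [one_smul]
    rw [heq] at hcombo
    rw [← hWopen.interior_eq]
    exact hcombo
  obtain ⟨X0, hX0, hX0σ⟩ := hσW
  exact ⟨X0, hX0, hX0σ⟩
def Dmat (n : ℕ) (k : Fin n) : Matrix (Fin n) (Fin n) ℝ :=
  Matrix.of fun i j => if i = k ∧ j = k then 1 else 0

lemma Dmat_mem_ball {n : ℕ} (k : Fin n) : Dmat n k ∈ opNormBall n := by
  rw [mem_opNormBall_iff]
  intro v
  have h1 : (Dmat n k) *ᵥ v = fun i => if i = k then v k else 0 := by
    funext i
    simp only [Dmat, Matrix.mulVec, dotProduct, Matrix.of_apply]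
    by_cases h : i = k
    · subst h
      simp
    · simp [h]
  rw [h1]
  have h2 : ((fun i => if i = k then v k else 0) ⬝ᵥ (fun i => if i = k then v k else 0)) 
      = v k * v k := by
    simp [dotProduct]
  rw [h2]
  have := Finset.single_le_sum (f := fun i => v i * v i) (fun i _ => mul_self_nonneg _)
    (Finset.mem_univ k)
  exact this

lemma sutProj_Dmat {n : ℕ} (k : Fin n) : sutProj (Dmat n k) = 0 := by
  funext q
  simp only [sutProj, Dmat, Matrix.of_apply]
  have : ¬(q.1.1 = k ∧ q.1.2 = k) := by
    rintro ⟨h1, h2⟩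
    have := q.2
    rw [h1, h2] at this
    exact lt_irrefl _ this
  simp [this]

lemma mip_Dmat {n : ℕ} (A : Matrix (Fin n) (Fin n) ℝ) (k : Fin n) :
    mip A (Dmat n k) = A k k := by
  simp only [mip, Dmat, Matrix.of_apply]
  rw [Finset.sum_eq_single k]
  · rw [Finset.sum_eq_single k]
    · simp
    · intro j _ hj
      simp [hj]
    · intro h
      exact absurd (Finset.mem_univ k) h
  · intro i _ hi
    apply Finset.sum_eq_zero
    intro j _
    simp [hi]
  · intro h
    exact absurd (Finset.mem_univ k) h

lemma psi_mip {n : ℕ} (ψ : ({q : Fin n × Fin n // q.1 < q.2} → ℝ) →ₗ[ℝ] ℝ)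
    (Y : Matrix (Fin n) (Fin n) ℝ) :
    ψ (sutProj Y) = mip (Mlin n (fun q => ψ (Pi.single q 1))) Y := by
  -- expand LHS
  have hx : sutProj Y = ∑ q : {q : Fin n × Fin n // q.1 < q.2},
      (sutProj Y q) • (Pi.single q (1:ℝ) : {q : Fin n × Fin n // q.1 < q.2} → ℝ) := by
    conv_lhs => rw [← Finset.univ_sum_single (sutProj Y)]
    apply Finset.sum_congr rfl
    intro q _
    funext j
    by_cases h : j = q <;> simp [Pi.single_apply, h]
  have hlhs : ψ (sutProj Y) = ∑ q : {q : Fin n × Fin n // q.1 < q.2},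
      Y q.1.1 q.1.2 * ψ (Pi.single q 1) := by
    conv_lhs => rw [hx]
    rw [map_sum]
    apply Finset.sum_congr rfl
    intro q _
    rw [_root_.map_smul, smul_eq_mul]
    rfl
  -- expand RHS
  have hrhs : mip (Mlin n (fun q => ψ (Pi.single q 1))) Y
      = ∑ q : {q : Fin n × Fin n // q.1 < q.2}, ψ (Pi.single q 1) * Y q.1.1 q.1.2 := by
    rw [mip]
    rw [← Finset.sum_product', Finset.univ_product_univ]
    rw [← Finset.sum_filter_of_ne (p := fun p : Fin n × Fin n => p.1 < p.2)
      (f := fun p : Fin n × Fin n => Mlin n (fun q => ψ (Pi.single q 1)) p.1 p.2 * Y p.1 p.2)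
      (by
        intro p _ hne
        by_contra hp
        apply hne
        simp only [Mlin, LinearMap.coe_mk, AddHom.coe_mk, Matrix.of_apply, dif_neg hp]
        ring)]
    rw [Finset.sum_subtype (p := fun p : Fin n × Fin n => p.1 < p.2) (Finset.univ.filter fun p : Fin n × Fin n => p.1 < p.2)
      (fun p => by simp) 
      (fun p : Fin n × Fin n => Mlin n (fun q => ψ (Pi.single q 1)) p.1 p.2 * Y p.1 p.2)]
    apply Finset.sum_congr rfl
    intro q _
    simp only [Mlin, LinearMap.coe_mk, AddHom.coe_mk, Matrix.of_apply, dif_pos q.2]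
  rw [hlhs, hrhs]
  apply Finset.sum_congr rfl
  intro q _
  ring
lemma mip_add_smul {n : ℕ} (A X D : Matrix (Fin n) (Fin n) ℝ) (c : ℝ) :
    mip A (X + c • D) = mip A X + c * mip A D := by
  have h1 := (mipL A).map_add X (c • D)
  have h2 := (mipL A).map_smul c D
  simp only [mipL, LinearMap.coe_mk, AddHom.coe_mk, smul_eq_mul] at h1 h2
  exact h1.trans (congrArg (fun z => mip A X + z) h2)

lemma sutProj_add_smul {n : ℕ} (X D : Matrix (Fin n) (Fin n) ℝ) (c : ℝ) :
    sutProj (X + c • D) = sutProj X + c • sutProj D := rfl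

set_option maxHeartbeats 1000000 in
lemma center {n : ℕ} (hn : 0 < n) (A : Matrix (Fin n) (Fin n) ℝ)
    (hdiagA : ∀ i j : Fin n, i ≠ j → A i j = 0) (hdet : A.det ≠ 0)
    (σ : {q : Fin n × Fin n // q.1 < q.2} → ℝ)
    (hσ : σ ∈ interior (sutProj '' opNormBall n))
    (Xs : Matrix (Fin n) (Fin n) ℝ) (hXb : Xs ∈ opNormBall n) (hXσ : sutProj Xs = σ)
    (hXmax : ∀ Y ∈ opNormBall n, sutProj Y = σ → mip A Y ≤ mip A Xs) :
    ∃ B' : Matrix (Fin n) (Fin n) ℝ, B'.det ≠ 0 ∧ (0 < A.det → 0 < B'.det) ∧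
      (∀ Y ∈ opNormBall n, mip B' Y ≤ mip B' Xs) ∧
      (∀ X Y : Matrix (Fin n) (Fin n) ℝ, sutProj X = sutProj Y → mip A X = mip A Y →
        mip B' X = mip B' Y) := by
  classical
  -- diagonal facts
  have hAtri : A.BlockTriangular id := by
    intro i j hij
    have hij' : j < i := hij
    exact hdiagA i j (Ne.symm (ne_of_lt hij'))
  have hdetA_prod : A.det = ∏ i, A i i := Matrix.det_of_upperTriangular hAtri
  have ha : ∀ i, A i i ≠ 0 := by
    rw [hdetA_prod] at hdet
    intro i
    exact Finset.prod_ne_zero_iff.mp hdet i (Finset.mem_univ i)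
  set k : Fin n := ⟨0, hn⟩ with hkdef
  have hak : A k k ≠ 0 := ha k
  -- the joint linear map
  set L : Matrix (Fin n) (Fin n) ℝ →ₗ[ℝ] (({q : Fin n × Fin n // q.1 < q.2} → ℝ) × ℝ) :=
    (sutProjL n).prod (mipL A) with hLdef
  have hLapp : ∀ Y, L Y = (sutProj Y, mip A Y) := fun Y => rfl
  -- continuous right inverse
  set G : (({q : Fin n × Fin n // q.1 < q.2} → ℝ) × ℝ) → Matrix (Fin n) (Fin n) ℝ :=
    fun y => Mlin n y.1 + ((y.2 - mip A (Mlin n y.1)) / A k k) • Dmat n k with hGdef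
  have hGcont : Continuous G := by
    apply Continuous.add
    · exact (Mlin n).continuous_of_finiteDimensional.comp continuous_fst
    · apply Continuous.fun_smul _ continuous_const
      apply Continuous.div_const
      apply Continuous.sub continuous_snd
      exact (mipL A).continuous_of_finiteDimensional.comp
        ((Mlin n).continuous_of_finiteDimensional.comp continuous_fst)
  have hLG : ∀ y, L (G y) = y := by
    rintro ⟨τ, t⟩
    rw [hLapp]
    have h1 : sutProj (G (τ, t)) = τ := by
      rw [hGdef]
      simp only
      rw [sutProj_add_smul, sutProj_Mlin, sutProj_Dmat, smul_zero, add_zero]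
    have h2 : mip A (G (τ, t)) = t := by
      rw [hGdef]
      simp only
      rw [mip_add_smul, mip_Dmat]
      field_simp
      ring
    rw [h1, h2]
  have hLopen : IsOpenMap L :=
    isOpenMap_of_rightInv L L.continuous_of_finiteDimensional G hGcont hLG
  -- the open convex image
  set U : Set ((({q : Fin n × Fin n // q.1 < q.2} → ℝ) × ℝ)) := L '' opBallLT n with hUdef
  have hUopen : IsOpen U := hLopen _ (isOpen_opBallLT n)
  have hUconvex : Convex ℝ U := (convex_opBallLT n).linear_image L
  set ms : ℝ := mip A Xs with hmsdef
  set p : (({q : Fin n × Fin n // q.1 < q.2} → ℝ) × ℝ) := (σ, ms) with hpdef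
  -- p is not in U
  have hpU : p ∉ U := by
    rintro ⟨X1, hX1lt, hX1eq⟩
    rw [hLapp] at hX1eq
    have hX1σ : sutProj X1 = σ := congrArg Prod.fst hX1eq
    have hX1m : mip A X1 = ms := congrArg Prod.snd hX1eq
    set s : ℝ := if 0 < A k k then 1 else -1 with hsdef
    have hsak : s * A k k = |A k k| := by
      rw [hsdef]
      rcases lt_trichotomy (A k k) 0 with h | h | h
      · rw [if_neg (by linarith), abs_of_neg h]; ring
      · exact absurd h hak
      · rw [if_pos h, abs_of_pos h]; ring
    have habs : |s| = 1 := by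
      rw [hsdef]
      split <;> simp
    set t : ℝ := 1 - opNorm X1 with htdef
    have ht : 0 < t := by
      have : opNorm X1 < 1 := hX1lt
      rw [htdef]; linarith
    set Y := X1 + (t * s) • Dmat n k with hYdef
    have hYball : Y ∈ opNormBall n := by
      show opNorm Y ≤ 1
      calc opNorm Y ≤ opNorm X1 + opNorm ((t*s) • Dmat n k) := opNorm_add_le _ _
        _ = opNorm X1 + |t*s| * opNorm (Dmat n k) := by rw [opNorm_smul]
        _ ≤ opNorm X1 + t * 1 := by
            rw [abs_mul, habs, abs_of_pos ht]
            have hD : opNorm (Dmat n k) ≤ 1 := Dmat_mem_ball k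
            have := opNorm_nonneg (Dmat n k)
            nlinarith
        _ = 1 := by rw [htdef]; ring
    have hYσ : sutProj Y = σ := by
      rw [hYdef, sutProj_add_smul, sutProj_Dmat, smul_zero, add_zero, hX1σ]
    have hYmip : mip A Y = ms + t * |A k k| := by
      rw [hYdef, mip_add_smul, mip_Dmat, hX1m]
      rw [← hsak]; ring
    have hcontra := hXmax Y hYball hYσ
    rw [hYmip] at hcontra
    have : 0 < t * |A k k| := mul_pos ht (abs_pos.mpr hak)
    linarith
  -- separation
  obtain ⟨f, hf⟩ := geometric_hahn_banach_point_open hUconvex hUopen hpU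
  have hdecomp : ∀ (x : {q : Fin n × Fin n // q.1 < q.2} → ℝ) (t : ℝ),
      f (x, t) = f (x, 0) + t * f (0, 1) := by
    intro x t
    have : ((x, t) : (({q : Fin n × Fin n // q.1 < q.2} → ℝ) × ℝ))
        = (x, (0:ℝ)) + t • ((0 : {q : Fin n × Fin n // q.1 < q.2} → ℝ), (1:ℝ)) := by
      simp [Prod.ext_iff]
    rw [this, map_add, _root_.map_smul, smul_eq_mul]
  set c : ℝ := f (0, 1) with hcdef
  -- strict inequality on the open ball
  have hstrict : ∀ Y ∈ opBallLT n, f p < f (L Y) := by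
    intro Y hY
    exact hf _ ⟨Y, hY, rfl⟩
  -- β < 0
  have hβ0 : f p < 0 := by
    have := hstrict 0 (zero_mem_opBallLT n)
    rwa [map_zero, map_zero] at this
  -- extension to the closed ball
  have hweak : ∀ Y ∈ opNormBall n, f p ≤ f (L Y) := by
    intro Y hY
    by_cases hg : 0 ≤ f (L Y)
    · linarith
    · push_neg at hg
      by_contra hcon
      push_neg at hcon
      set t : ℝ := f p / f (L Y) with htdef
      have hgne : f (L Y) ≠ 0 := ne_of_lt hg
      have ht0 : 0 < t := div_pos_of_neg_of_neg hβ0 hg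
      have htmul : t * f (L Y) = f p := by
        rw [htdef]; field_simp
      have ht1 : t < 1 := by
        by_contra h'
        push_neg at h'
        nlinarith
      have hmem := smul_mem_opBallLT hY (le_of_lt ht0) ht1
      have := hstrict _ hmem
      rw [_root_.map_smul, _root_.map_smul, smul_eq_mul] at this
      linarith
  -- the Slater point and sign of c
  obtain ⟨X0, hX0lt, hX0σ⟩ := slater hσ
  have hcneg : c < 0 := by
    have h1 := hstrict X0 hX0lt
    rw [hLapp, hX0σ] at h1
    have h2 : mip A X0 ≤ ms := hXmax X0 (opBallLT_subset_ball n hX0lt) hX0σ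
    rw [hpdef, hdecomp σ ms, hdecomp σ (mip A X0)] at h1
    by_contra h'
    push_neg at h'
    have h3 := mul_le_mul_of_nonneg_right h2 h'
    linarith
  -- the dual matrix
  set ψL : ({q : Fin n × Fin n // q.1 < q.2} → ℝ) →ₗ[ℝ] ℝ :=
    f.toLinearMap.comp (LinearMap.inl ℝ ({q : Fin n × Fin n // q.1 < q.2} → ℝ) ℝ) with hψLdef
  have hψL : ∀ x, ψL x = f (x, 0) := fun x => rfl
  set B' : Matrix (Fin n) (Fin n) ℝ :=
    (-c) • A - Mlin n (fun q => ψL (Pi.single q 1)) with hB'def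
  have hmipB' : ∀ Y, mip B' Y = -(f (L Y)) := by
    intro Y
    rw [hB'def, mip_sub_left, mip_smul_left, ← psi_mip ψL Y]
    rw [hLapp, hdecomp (sutProj Y) (mip A Y), hψL]
    ring
  refine ⟨B', ?_, ?_, ?_, ?_⟩
  · -- det ≠ 0
    have hB'tri : B'.BlockTriangular id := by
      intro i j hij
      have hijlt : j < i := hij
      have hij' : ¬ (i < j) := by exact not_lt_of_gt hijlt
      rw [hB'def]
      simp only [Matrix.sub_apply, Matrix.smul_apply, smul_eq_mul]
      rw [hdiagA i j (Ne.symm (ne_of_lt hijlt))]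
      simp only [Mlin, LinearMap.coe_mk, AddHom.coe_mk, Matrix.of_apply, dif_neg hij']
      ring
    have hB'diag : ∀ i, B' i i = (-c) * A i i := by
      intro i
      rw [hB'def]
      simp only [Matrix.sub_apply, Matrix.smul_apply, smul_eq_mul]
      simp only [Mlin, LinearMap.coe_mk, AddHom.coe_mk, Matrix.of_apply,
        dif_neg (lt_irrefl i)]
      ring
    have hdetB' : B'.det = (-c)^n * A.det := by
      rw [Matrix.det_of_upperTriangular hB'tri]
      rw [hdetA_prod]
      rw [Finset.prod_congr rfl (fun i _ => hB'diag i)]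
      rw [Finset.prod_mul_distrib, Finset.prod_const]
      congr 1
      rw [Finset.card_univ, Fintype.card_fin]
    rw [hdetB']
    apply mul_ne_zero _ hdet
    apply pow_ne_zero
    linarith
  · -- positivity
    intro hApos
    have hB'tri : B'.BlockTriangular id := by
      intro i j hij
      have hijlt : j < i := hij
      have hij' : ¬ (i < j) := by exact not_lt_of_gt hijlt
      rw [hB'def]
      simp only [Matrix.sub_apply, Matrix.smul_apply, smul_eq_mul]
      rw [hdiagA i j (Ne.symm (ne_of_lt hijlt))]
      simp only [Mlin, LinearMap.coe_mk, AddHom.coe_mk, Matrix.of_apply, dif_neg hij']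
      ring
    have hB'diag : ∀ i, B' i i = (-c) * A i i := by
      intro i
      rw [hB'def]
      simp only [Matrix.sub_apply, Matrix.smul_apply, smul_eq_mul]
      simp only [Mlin, LinearMap.coe_mk, AddHom.coe_mk, Matrix.of_apply,
        dif_neg (lt_irrefl i)]
      ring
    have hdetB' : B'.det = (-c)^n * A.det := by
      rw [Matrix.det_of_upperTriangular hB'tri]
      rw [hdetA_prod]
      rw [Finset.prod_congr rfl (fun i _ => hB'diag i)]
      rw [Finset.prod_mul_distrib, Finset.prod_const]
      congr 1
      rw [Finset.card_univ, Fintype.card_fin]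
    rw [hdetB']
    apply mul_pos _ hApos
    apply pow_pos
    linarith
  · -- inequality
    intro Y hY
    rw [hmipB' Y, hmipB' Xs]
    have hLXs : L Xs = p := by
      rw [hLapp, hXσ, ← hmsdef, hpdef]
    rw [hLXs]
    have := hweak Y hY
    linarith
  · -- dependence only on (sutProj, mip A)
    intro X Y hπ hm
    rw [hmipB' X, hmipB' Y, hLapp, hLapp, hπ, hm]


/-- Let `A` be diagonal with `det A ≠ 0` and `σ` in the interior of the
projection of the operator norm ball onto the strictly upper triangular
entries. Then `⟨A, ·⟩` has a unique maximizer over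
`{X ∈ B_op(n) : π_T(X) = σ}`; this maximizer is orthogonal, and special
orthogonal if moreover `det A > 0`. -/
theorem unique_orthogonal_maximizer_sut (n : ℕ)
    (A : Matrix (Fin n) (Fin n) ℝ) (hdiagA : ∀ i j : Fin n, i ≠ j → A i j = 0)
    (hdet : A.det ≠ 0)
    (σ : {q : Fin n × Fin n // q.1 < q.2} → ℝ)
    (hσ : σ ∈ interior (sutProj '' opNormBall n)) :
    (∃! X : Matrix (Fin n) (Fin n) ℝ,
      X ∈ opNormBall n ∧ sutProj X = σ ∧
        ∀ Y ∈ opNormBall n, sutProj Y = σ → (Aᵀ * Y).trace ≤ (Aᵀ * X).trace) ∧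
    (∀ X : Matrix (Fin n) (Fin n) ℝ,
      (X ∈ opNormBall n ∧ sutProj X = σ ∧
        ∀ Y ∈ opNormBall n, sutProj Y = σ → (Aᵀ * Y).trace ≤ (Aᵀ * X).trace) →
      Xᵀ * X = 1 ∧ (0 < A.det → X.det = 1)) := by
  rcases Nat.eq_zero_or_pos n with hn | hn
  · -- degenerate case n = 0
    subst hn
    have hall : ∀ X Y : Matrix (Fin 0) (Fin 0) ℝ, X = Y := by
      intro X Y
      ext i j
      exact i.elim0
    have hσ0 : ∀ X : Matrix (Fin 0) (Fin 0) ℝ, sutProj X = σ := by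
      intro X
      funext q
      exact (q.1.1).elim0
    constructor
    · refine ⟨0, ⟨zero_mem_opNormBall 0, hσ0 0, ?_⟩, ?_⟩
      · intro Y _ _
        rw [hall Y 0]
      · intro Y _
        exact hall Y 0
    · intro X _
      constructor
      · ext i j
        exact i.elim0
      · intro _
        have : X.det = (1 : Matrix (Fin 0) (Fin 0) ℝ).det := by rw [hall X 1]
        rwa [Matrix.det_one] at this
  · -- main case
    have hKclosed : IsClosed {X : Matrix (Fin n) (Fin n) ℝ | sutProj X = σ} := by
      have : {X : Matrix (Fin n) (Fin n) ℝ | sutProj X = σ} = sutProj ⁻¹' {σ} := by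
        ext X; simp
      rw [this]
      exact IsClosed.preimage (continuous_sutProj n) isClosed_singleton
    have hKcomp : IsCompact (opNormBall n ∩ {X | sutProj X = σ}) :=
      (isCompact_opNormBall n).inter_right hKclosed
    have hKne : (opNormBall n ∩ {X | sutProj X = σ}).Nonempty := by
      obtain ⟨X₀, hX₀b, hX₀σ⟩ := interior_subset hσ
      exact ⟨X₀, hX₀b, hX₀σ⟩
    have hfc : Continuous (fun X : Matrix (Fin n) (Fin n) ℝ => mip A X) :=
      (mipL A).continuous_of_finiteDimensional
    obtain ⟨Xs, hXsK, hXsmax⟩ := hKcomp.exists_isMaxOn hKne hfc.continuousOn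
    have hXsb : Xs ∈ opNormBall n := hXsK.1
    have hXsσ : sutProj Xs = σ := hXsK.2
    have hXmax : ∀ Y ∈ opNormBall n, sutProj Y = σ → mip A Y ≤ mip A Xs :=
      fun Y hY hYσ => hXsmax ⟨hY, hYσ⟩
    obtain ⟨B', hB'0, hB'pos, hB'max, hB'dep⟩ := center hn A hdiagA hdet σ hσ Xs hXsb hXsσ hXmax
    obtain ⟨Q, hQorth, hQball, hQdet, hQmax⟩ := fact2 B' hB'0
    have hXsQ : Xs = Q := by
      have h1 := (hQmax Xs hXsb).1
      have h2 := hB'max Q hQball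
      exact (hQmax Xs hXsb).2 (le_antisymm h1 h2)
    have hP : ∀ X : Matrix (Fin n) (Fin n) ℝ,
        (X ∈ opNormBall n ∧ sutProj X = σ ∧
          ∀ Y ∈ opNormBall n, sutProj Y = σ → (Aᵀ * Y).trace ≤ (Aᵀ * X).trace) → X = Q := by
      rintro X ⟨hXb', hXσ', hXm'⟩
      have hm1 : mip A Xs ≤ mip A X := by
        rw [mip_eq_trace, mip_eq_trace]
        exact hXm' Xs hXsb hXsσ
      have hm2 : mip A X ≤ mip A Xs := hXmax X hXb' hXσ'
      have heq : mip A X = mip A Xs := le_antisymm hm2 hm1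
      have hdep := hB'dep X Xs (by rw [hXσ', hXsσ]) heq
      have h3 : mip B' Q ≤ mip B' Xs := hB'max Q hQball
      have h4 := (hQmax X hXb').1
      have h5 : mip B' X = mip B' Q := by
        apply le_antisymm h4
        rw [hdep]
        exact h3
      exact (hQmax X hXb').2 h5
    have hPXs : Xs ∈ opNormBall n ∧ sutProj Xs = σ ∧
        ∀ Y ∈ opNormBall n, sutProj Y = σ → (Aᵀ * Y).trace ≤ (Aᵀ * Xs).trace := by
      refine ⟨hXsb, hXsσ, ?_⟩
      intro Y hY hYσ
      rw [← mip_eq_trace, ← mip_eq_trace]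
      exact hXmax Y hY hYσ
    constructor
    · exact ⟨Xs, hPXs, fun Y hY => (hP Y hY).trans hXsQ.symm⟩
    · intro X hX
      have hXQ : X = Q := hP X hX
      refine ⟨by rw [hXQ, hQorth], fun h => ?_⟩
      rw [hXQ]
      exact hQdet (hB'pos h)
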